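/- As x → ∞, the sum ψ(x) = Σ_{p ≤ x, p prime} (log p)/(p-1) is asymptotically equivalent to log x, i.e. ψ(x)/log x → 1. -/

import Mathlib

open Finset Nat

/-! Auxiliary material for Mertens' first theorem. -/

private noncomputable def Kc : ℝ := ∑' k : ℕ, 4 * (1 / (k:ℝ) ^ (3/2 : ℝ))

private lemma g_summable : Summable (fun k : ℕ => 4 * (1 / (k:ℝ) ^ (3/2 : ℝ))) :=
  (Real.summable_one_div_nat_rpow.mpr (by norm_num)).mul_left 4

private lemma fact_val_upper {p : ℕ} (hp : p.Prime) (n : ℕ) :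
    (p - 1) * (n !).factorization p ≤ n := by
  haveI : Fact p.Prime := ⟨hp⟩
  rw [Nat.factorization_def _ hp, sub_one_mul_padicValNat_factorial]
  exact Nat.sub_le _ _

private lemma fact_val_lower {p : ℕ} (hp : p.Prime) (n : ℕ) :
    n / p ≤ (n !).factorization p := by
  haveI : Fact p.Prime := ⟨hp⟩
  rw [Nat.factorization_def _ hp,
    padicValNat_factorial (lt_succ_of_lt (Nat.lt.base (Nat.log p n)))]
  rcases Nat.lt_or_ge n p with h | h
  · simp [Nat.div_eq_of_lt h]
  · have h1 : 1 ∈ Finset.Ico 1 (Nat.log p n + 1 + 1) := by simp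
    calc n / p = n / p ^ 1 := by rw [pow_one]
    _ ≤ _ := Finset.single_le_sum (fun (i:ℕ) _ => Nat.zero_le (n / p ^ i)) h1

private lemma log_factorial_eq (n : ℕ) :
    Real.log (n ! : ℝ) =
      ∑ p ∈ (Finset.range (n+1)).filter Nat.Prime, ((n !).factorization p : ℝ) * Real.log p := by
  have hsub : (n !).factorization.support ⊆ (Finset.range (n+1)).filter Nat.Prime := by
    intro p hp
    rw [Nat.support_factorization, Nat.mem_primeFactors] at hp
    simp only [Finset.mem_filter, Finset.mem_range]
    exact ⟨Nat.lt_succ_of_le ((Nat.Prime.dvd_factorial hp.1).mp hp.2.1), hp.1⟩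
  have hpos : ∀ p ∈ (n !).factorization.support, (p : ℝ) ^ ((n !).factorization p) ≠ 0 := by
    intro p hp
    rw [Nat.support_factorization, Nat.mem_primeFactors] at hp
    exact pow_ne_zero _ (Nat.cast_ne_zero.mpr hp.1.pos.ne')
  conv_lhs => rw [← Nat.factorization_prod_pow_eq_self (Nat.factorial_ne_zero n)]
  rw [Finsupp.prod, Nat.cast_prod]
  push_cast
  rw [Real.log_prod hpos]
  rw [Finset.sum_congr rfl (fun p _ => Real.log_pow _ _)]
  refine Finset.sum_subset hsub ?_
  intro p _ hnp
  rw [Finsupp.notMem_support_iff] at hnp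
  rw [hnp]
  simp

private lemma pow_self_le_factorial_mul_exp (n : ℕ) : (n : ℝ) ^ n ≤ n ! * Real.exp n := by
  induction n with
  | zero => simp
  | succ n ih =>
    have key : ((n:ℝ) + 1) ^ n ≤ (n:ℝ) ^ n * Real.exp 1 := by
      rcases Nat.eq_zero_or_pos n with h | h
      · simp [h, Real.one_le_exp zero_le_one]
      · have hn : (0:ℝ) < n := by exact_mod_cast h
        have h1 : (n:ℝ) + 1 = n * (1 + 1/n) := by field_simp
        rw [h1, mul_pow]
        gcongr
        calc (1 + 1/(n:ℝ)) ^ n ≤ (Real.exp (1/n)) ^ n := by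
              gcongr
              exact Real.add_one_le_exp _ |>.trans_eq' (by ring_nf)
        _ = Real.exp 1 := by
              rw [← Real.exp_nat_mul]
              congr 1
              field_simp
    have hfn : (0:ℝ) ≤ (n ! : ℝ) := Nat.cast_nonneg _
    have hexp : (0:ℝ) < Real.exp n := Real.exp_pos _
    have he : (0:ℝ) < Real.exp 1 := Real.exp_pos 1
    have hp1 : (0:ℝ) ≤ (n:ℝ) + 1 := by positivity
    have hpn : (0:ℝ) ≤ (n:ℝ) ^ n := by positivity
    push_cast [Nat.factorial_succ]
    calc ((n:ℝ) + 1) ^ (n + 1) = ((n:ℝ) + 1) * ((n:ℝ) + 1) ^ n := by ring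
    _ ≤ ((n:ℝ) + 1) * ((n ! : ℝ) * Real.exp n * Real.exp 1) := by
        have h2 : ((n:ℝ) + 1) ^ n ≤ (n ! : ℝ) * Real.exp n * Real.exp 1 := by
          refine key.trans ?_
          exact mul_le_mul_of_nonneg_right ih he.le
        gcongr
    _ = ((n:ℝ) + 1) * (n ! : ℝ) * Real.exp ((n:ℝ) + 1) := by
        rw [Real.exp_add]
        ring

private lemma log_fact_le (n : ℕ) :
    Real.log (n ! : ℝ) ≤
      n * ∑ p ∈ (Finset.range (n+1)).filter Nat.Prime, Real.log p / ((p : ℝ) - 1) := by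
  rw [log_factorial_eq, Finset.mul_sum]
  refine Finset.sum_le_sum ?_
  intro p hp
  simp only [Finset.mem_filter] at hp
  have hp2 : (2:ℝ) ≤ p := by exact_mod_cast hp.2.two_le
  have hlog : 0 ≤ Real.log p := Real.log_nonneg (by linarith)
  have hub : ((p:ℝ) - 1) * ((n !).factorization p : ℝ) ≤ n := by
    have := fact_val_upper hp.2 n
    have h1 : (((p-1) * (n !).factorization p : ℕ) : ℝ) ≤ n := by exact_mod_cast this
    push_cast [Nat.cast_sub hp.2.one_le] at h1
    linarith [h1]
  have hv : ((n !).factorization p : ℝ) ≤ n / ((p:ℝ) - 1) := by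
    rw [le_div_iff₀ (by linarith)]
    linarith [hub]
  calc ((n !).factorization p : ℝ) * Real.log p ≤ (n / ((p:ℝ) - 1)) * Real.log p :=
        mul_le_mul_of_nonneg_right hv hlog
  _ = n * (Real.log p / ((p:ℝ) - 1)) := by ring

private lemma theta_le (n : ℕ) :
    ∑ p ∈ (Finset.range (n+1)).filter Nat.Prime, Real.log p ≤ n * Real.log 4 := by
  have h1 : ∑ p ∈ (Finset.range (n+1)).filter Nat.Prime, Real.log p
      = Real.log (primorial n : ℝ) := by
    rw [primorial, Nat.cast_prod, Real.log_prod]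
    intro p hp
    simp only [Finset.mem_filter] at hp
    exact_mod_cast hp.2.pos.ne'
  rw [h1]
  calc Real.log (primorial n : ℝ) ≤ Real.log ((4:ℝ) ^ n) := by
        apply Real.log_le_log (by exact_mod_cast primorial_pos n)
        exact_mod_cast primorial_le_4_pow n
  _ = n * Real.log 4 := by rw [Real.log_pow]

private lemma sum_log_div_le (n : ℕ) :
    (n : ℝ) * ∑ p ∈ (Finset.range (n+1)).filter Nat.Prime, Real.log p / p ≤
      Real.log (n ! : ℝ) + ∑ p ∈ (Finset.range (n+1)).filter Nat.Prime, Real.log p := by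
  rw [log_factorial_eq, Finset.mul_sum, ← Finset.sum_add_distrib]
  refine Finset.sum_le_sum ?_
  intro p hp
  simp only [Finset.mem_filter] at hp
  have hp0 : (0:ℝ) < p := by exact_mod_cast hp.2.pos
  have hlog : 0 ≤ Real.log p := Real.log_nonneg (by exact_mod_cast hp.2.one_le)
  have hfloor : (n : ℝ) / p - 1 ≤ ((n / p : ℕ) : ℝ) := by
    have hmod : (n : ℝ) = p * ((n / p : ℕ) : ℝ) + ((n % p : ℕ) : ℝ) := by
      exact_mod_cast (Nat.div_add_mod n p).symm.trans (by ring_nf)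
    have hmlt : ((n % p : ℕ) : ℝ) < p := by exact_mod_cast Nat.mod_lt n hp.2.pos
    rw [div_sub_one hp0.ne', div_le_iff₀ hp0]
    nlinarith
  have hv : ((n / p : ℕ) : ℝ) ≤ ((n !).factorization p : ℝ) := by
    exact_mod_cast fact_val_lower hp.2 n
  calc (n:ℝ) * (Real.log p / p) = ((n:ℝ)/p - 1) * Real.log p + Real.log p := by ring
  _ ≤ ((n !).factorization p : ℝ) * Real.log p + Real.log p := by
      gcongr
      linarith

private lemma tail_sum_le (n : ℕ) :
    ∑ p ∈ (Finset.range (n+1)).filter Nat.Prime,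
        Real.log p / ((p:ℝ) * ((p:ℝ) - 1)) ≤ Kc := by
  have hterm : ∀ p ∈ (Finset.range (n+1)).filter Nat.Prime,
      Real.log p / ((p:ℝ) * ((p:ℝ) - 1)) ≤ 4 * (1 / (p:ℝ) ^ (3/2 : ℝ)) := by
    intro p hp
    simp only [Finset.mem_filter] at hp
    have hp2 : (2:ℝ) ≤ p := by exact_mod_cast hp.2.two_le
    have hp0 : (0:ℝ) < p := by linarith
    have hs : (0:ℝ) < Real.sqrt p := Real.sqrt_pos.mpr hp0
    have hlog : Real.log p ≤ 2 * Real.sqrt p := by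
      have h1 : Real.log (Real.sqrt p) ≤ Real.sqrt p - 1 := Real.log_le_sub_one_of_pos hs
      have h2 : Real.log p = 2 * Real.log (Real.sqrt p) := by
        rw [Real.log_sqrt hp0.le]; ring
      linarith
    have hrw : (p:ℝ) ^ (3/2 : ℝ) = (p:ℝ) * Real.sqrt p := by
      rw [Real.sqrt_eq_rpow, ← Real.rpow_one_add' hp0.le (by norm_num)]
      norm_num
    have hd : (0:ℝ) < (p:ℝ) * ((p:ℝ) - 1) := by nlinarith
    have hX : (0:ℝ) < (p:ℝ) * Real.sqrt p := by positivity
    have hsq : Real.sqrt p * Real.sqrt p = p := Real.mul_self_sqrt hp0.le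
    rw [hrw, mul_one_div, div_le_div_iff₀ hd hX]
    nlinarith [mul_le_mul_of_nonneg_right hlog hX.le]
  calc ∑ p ∈ (Finset.range (n+1)).filter Nat.Prime,
        Real.log p / ((p:ℝ) * ((p:ℝ) - 1))
      ≤ ∑ p ∈ (Finset.range (n+1)).filter Nat.Prime, 4 * (1 / (p:ℝ) ^ (3/2 : ℝ)) :=
        Finset.sum_le_sum hterm
  _ ≤ Kc := Summable.sum_le_tsum _ (fun k _ => by positivity) g_summable

private lemma S_lower {n : ℕ} (hn : 1 ≤ n) :
    Real.log n - 1 ≤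
      ∑ p ∈ (Finset.range (n+1)).filter Nat.Prime, Real.log p / ((p : ℝ) - 1) := by
  have hn0 : (0:ℝ) < n := by exact_mod_cast hn
  have h1 : (n:ℝ) * Real.log n - n ≤ Real.log (n ! : ℝ) := by
    have h2 : Real.log ((n:ℝ) ^ n) ≤ Real.log ((n ! : ℝ) * Real.exp n) := by
      apply Real.log_le_log (by positivity) (pow_self_le_factorial_mul_exp n)
    rw [Real.log_pow, Real.log_mul (by positivity) (Real.exp_ne_zero _), Real.log_exp] at h2
    linarith [h2]
  have h3 := log_fact_le n
  have h4 : (n:ℝ) * (Real.log n - 1) ≤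
      (n:ℝ) * ∑ p ∈ (Finset.range (n+1)).filter Nat.Prime, Real.log p / ((p : ℝ) - 1) := by
    nlinarith
  exact le_of_mul_le_mul_left h4 hn0

private lemma S_upper {n : ℕ} (hn : 1 ≤ n) :
    ∑ p ∈ (Finset.range (n+1)).filter Nat.Prime, Real.log p / ((p : ℝ) - 1) ≤
      Real.log n + Real.log 4 + Kc := by
  have hn0 : (0:ℝ) < n := by exact_mod_cast hn
  have hsplit : ∑ p ∈ (Finset.range (n+1)).filter Nat.Prime, Real.log p / ((p : ℝ) - 1)
      = (∑ p ∈ (Finset.range (n+1)).filter Nat.Prime, Real.log p / p)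
        + ∑ p ∈ (Finset.range (n+1)).filter Nat.Prime,
            Real.log p / ((p:ℝ) * ((p:ℝ) - 1)) := by
    rw [← Finset.sum_add_distrib]
    refine Finset.sum_congr rfl ?_
    intro p hp
    simp only [Finset.mem_filter] at hp
    have hp2 : (2:ℝ) ≤ p := by exact_mod_cast hp.2.two_le
    have h0 : (p:ℝ) ≠ 0 := by linarith
    have h1 : (p:ℝ) - 1 ≠ 0 := by intro h; nlinarith [h]
    field_simp
    ring
  have hfactle : Real.log (n ! : ℝ) ≤ (n:ℝ) * Real.log n := by
    have h2 : Real.log (n ! : ℝ) ≤ Real.log ((n:ℝ) ^ n) := by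
      apply Real.log_le_log (by exact_mod_cast Nat.factorial_pos n)
      exact_mod_cast Nat.factorial_le_pow n
    rwa [Real.log_pow] at h2
  have hA : ∑ p ∈ (Finset.range (n+1)).filter Nat.Prime, Real.log p / p ≤
      Real.log n + Real.log 4 := by
    have h4 := sum_log_div_le n
    have h5 := theta_le n
    have h6 : (n:ℝ) * ∑ p ∈ (Finset.range (n+1)).filter Nat.Prime, Real.log p / p ≤
        (n:ℝ) * (Real.log n + Real.log 4) := by nlinarith
    exact le_of_mul_le_mul_left h6 hn0
  rw [hsplit]
  linarith [tail_sum_le n, hA]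

/-- As `x → ∞`, `ψ(x) = Σ_{p ≤ x, p prime} (log p)/(p-1)` is asymptotically
equivalent to `log x`. -/
theorem stmt3 :
    Filter.Tendsto
      (fun x : ℝ =>
        (∑ p ∈ (Finset.range (⌊x⌋₊ + 1)).filter Nat.Prime, Real.log p / ((p : ℝ) - 1))
          / Real.log x)
      Filter.atTop (nhds 1) := by
  have hinv : Filter.Tendsto (fun x : ℝ => (Real.log x)⁻¹) Filter.atTop (nhds 0) :=
    Real.tendsto_log_atTop.inv_tendsto_atTop
  have hlow : Filter.Tendsto (fun x : ℝ => 1 - (Real.log 2 + 1) * (Real.log x)⁻¹)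
      Filter.atTop (nhds 1) := by
    have := (hinv.const_mul (Real.log 2 + 1)).const_sub 1
    simpa using this
  have hhigh : Filter.Tendsto (fun x : ℝ => 1 + (Real.log 4 + Kc) * (Real.log x)⁻¹)
      Filter.atTop (nhds 1) := by
    have := (hinv.const_mul (Real.log 4 + Kc)).const_add 1
    simpa using this
  refine tendsto_of_tendsto_of_tendsto_of_le_of_le' hlow hhigh ?_ ?_
  · filter_upwards [Filter.eventually_ge_atTop (2:ℝ)] with x hx
    set n := ⌊x⌋₊ with hn
    have hn1 : 1 ≤ n := Nat.le_floor (by exact_mod_cast (by linarith : (1:ℝ) ≤ x))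
    have hnx : (n:ℝ) ≤ x := Nat.floor_le (by linarith)
    have hxn : x < (n:ℝ) + 1 := Nat.lt_floor_add_one x
    have hn1R : (1:ℝ) ≤ n := by exact_mod_cast hn1
    have hlogpos : 0 < Real.log x := Real.log_pos (by linarith)
    have hlogxn : Real.log x ≤ Real.log n + Real.log 2 := by
      calc Real.log x ≤ Real.log ((n:ℝ) * 2) := by
            apply Real.log_le_log (by linarith)
            linarith
      _ = Real.log n + Real.log 2 := Real.log_mul (by linarith) (by norm_num)
    have hS := S_lower hn1
    rw [le_div_iff₀ hlogpos]
    have heq : (1 - (Real.log 2 + 1) * (Real.log x)⁻¹) * Real.log x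
        = Real.log x - (Real.log 2 + 1) := by
      field_simp
    rw [heq]
    linarith
  · filter_upwards [Filter.eventually_ge_atTop (2:ℝ)] with x hx
    set n := ⌊x⌋₊ with hn
    have hn1 : 1 ≤ n := Nat.le_floor (by exact_mod_cast (by linarith : (1:ℝ) ≤ x))
    have hnx : (n:ℝ) ≤ x := Nat.floor_le (by linarith)
    have hn1R : (1:ℝ) ≤ n := by exact_mod_cast hn1
    have hlogpos : 0 < Real.log x := Real.log_pos (by linarith)
    have hlognx : Real.log (n:ℝ) ≤ Real.log x := Real.log_le_log (by linarith) hnx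
    have hS := S_upper hn1
    rw [div_le_iff₀ hlogpos]
    have heq : (1 + (Real.log 4 + Kc) * (Real.log x)⁻¹) * Real.log x
        = Real.log x + (Real.log 4 + Kc) := by
      field_simp
    rw [heq]
    linarith
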